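/- arXiv:2509.00445 — 2 statements merged into one kernel-verified Lean document; each statement's English description precedes it below -/
import Mathlib

section
/- In the symmetric group S_n (n ≥ 2) with the lexicographic order on transpositions — (i j) ≺ (i' j') for i<j, i'<j' iff i < i' or (i = i' and j < j') — every interval [x, y] in the noncrossing partition poset NC(S_n, (1 2 ... n)) contains a unique maximal chain with strictly ≺-increasing edge labels. -/
open Equiv

noncomputable def wordLen {G : Type*} [Group G] (R : Set G) (g : G) : ℕ :=
  sInf {k | ∃ l : List G, (∀ x ∈ l, x ∈ R) ∧ l.length = k ∧ l.prod = g}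

noncomputable def reflLen {n : ℕ} (σ : Perm (Fin n)) : ℕ :=
  wordLen {τ : Perm (Fin n) | τ.IsSwap} σ

noncomputable def absLe {n : ℕ} (u v : Perm (Fin n)) : Prop :=
  reflLen u + reflLen (u⁻¹ * v) = reflLen v

noncomputable def absLt {n : ℕ} (u v : Perm (Fin n)) : Prop :=
  absLe u v ∧ u ≠ v

/-- Cover relation in the absolute order. -/
noncomputable def absCovers {n : ℕ} (u v : Perm (Fin n)) : Prop :=
  absLt u v ∧ ∀ z : Perm (Fin n), ¬ (absLt u z ∧ absLt z v)

/-- Lexicographic order on transpositions: `(i j) ≺ (i' j')` (for `i < j`, `i' < j'`) iff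
`i < i'`, or `i = i'` and `j < j'`. -/
def transLt {n : ℕ} (τ τ' : Perm (Fin n)) : Prop :=
  ∃ i j i' j' : Fin n, i < j ∧ i' < j' ∧ τ = Equiv.swap i j ∧ τ' = Equiv.swap i' j' ∧
    (i < i' ∨ (i = i' ∧ j < j'))

section Basics
variable {n : ℕ}

lemma reflLen_le {σ : Perm (Fin n)} {l : List (Perm (Fin n))} (hl : ∀ t ∈ l, t.IsSwap)
    (hp : l.prod = σ) : reflLen σ ≤ l.length :=
  Nat.sInf_le ⟨l, hl, rfl, hp⟩

lemma reflLen_spec (σ : Perm (Fin n)) :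
    ∃ l : List (Perm (Fin n)), (∀ t ∈ l, t.IsSwap) ∧ l.length = reflLen σ ∧ l.prod = σ := by
  have hne : {k | ∃ l : List (Perm (Fin n)),
      (∀ x ∈ l, x ∈ {τ : Perm (Fin n) | τ.IsSwap}) ∧ l.length = k ∧ l.prod = σ}.Nonempty := by
    obtain ⟨⟨l, hp, hs⟩⟩ := (Equiv.Perm.truncSwapFactors σ)
    exact ⟨l.length, l, fun x hx => hs x hx, rfl, hp⟩
  obtain ⟨l, h1, h2, h3⟩ := Nat.sInf_mem hne
  exact ⟨l, h1, h2, h3⟩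

@[simp] lemma reflLen_one : reflLen (1 : Perm (Fin n)) = 0 :=
  Nat.le_zero.mp (reflLen_le (l := []) (by simp) (by simp))

lemma reflLen_eq_zero_iff {σ : Perm (Fin n)} : reflLen σ = 0 ↔ σ = 1 := by
  constructor
  · intro h
    obtain ⟨l, _, hlen, hprod⟩ := reflLen_spec σ
    rw [h, List.length_eq_zero_iff] at hlen
    simp [hlen] at hprod; exact hprod.symm
  · rintro rfl; simp

lemma reflLen_swap {a b : Fin n} (h : a ≠ b) : reflLen (Equiv.swap a b) = 1 := by
  have h1 : reflLen (Equiv.swap a b) ≤ 1 := reflLen_le (l := [Equiv.swap a b]) (by simp [Equiv.Perm.IsSwap]; exact ⟨a, b, h, rfl⟩) (by simp)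
  have h0 : reflLen (Equiv.swap a b) ≠ 0 := by
    intro h0
    have hc := reflLen_eq_zero_iff.mp h0
    have := Equiv.congr_fun hc a
    simp [Equiv.swap_apply_left] at this
    exact h this.symm
  omega

lemma reflLen_mul_le (u v : Perm (Fin n)) : reflLen (u * v) ≤ reflLen u + reflLen v := by
  obtain ⟨l1, h1, hl1, hp1⟩ := reflLen_spec u
  obtain ⟨l2, h2, hl2, hp2⟩ := reflLen_spec v
  calc reflLen (u * v) ≤ (l1 ++ l2).length := reflLen_le (by
        intro t ht; rcases List.mem_append.mp ht with h | h
        exacts [h1 t h, h2 t h]) (by simp [hp1, hp2])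
    _ = reflLen u + reflLen v := by simp [hl1, hl2]

lemma reflLen_conj (g σ : Perm (Fin n)) : reflLen (g * σ * g⁻¹) = reflLen σ := by
  have key : ∀ τ g : Perm (Fin n), reflLen (g * τ * g⁻¹) ≤ reflLen τ := by
    intro τ g
    obtain ⟨l, hs, hlen, hp⟩ := reflLen_spec τ
    have : (l.map fun t => g * t * g⁻¹).prod = g * τ * g⁻¹ := by
      clear hs hlen
      induction l generalizing τ with
      | nil => simp [← hp]
      | cons a tl ih =>
        simp only [List.map_cons, List.prod_cons]
        rw [ih tl.prod rfl]
        simp [← hp, mul_assoc]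
    have hle := reflLen_le (l := l.map fun t => g * t * g⁻¹) (by
      intro t ht
      obtain ⟨s, hsl, rfl⟩ := List.mem_map.mp ht
      obtain ⟨a, b, hab, rfl⟩ := hs s hsl
      exact ⟨g a, g b, by simp [hab], (Equiv.swap_apply_apply g a b).symm ▸ rfl⟩) this
    simpa [hlen] using hle
  refine le_antisymm (key σ g) ?_
  have := key (g * σ * g⁻¹) g⁻¹
  calc reflLen σ = reflLen (g⁻¹ * (g * σ * g⁻¹) * g⁻¹⁻¹) := by group
    _ ≤ reflLen (g * σ * g⁻¹) := this

lemma reflLen_inv (σ : Perm (Fin n)) : reflLen σ⁻¹ = reflLen σ := by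
  have key : ∀ τ : Perm (Fin n), reflLen τ⁻¹ ≤ reflLen τ := by
    intro τ
    obtain ⟨l, hs, hlen, hp⟩ := reflLen_spec τ
    have hrev : ((l.map fun x => x⁻¹).reverse).prod = τ⁻¹ := by
      rw [← List.prod_inv_reverse, hp]
    have := reflLen_le (l := (l.map fun x => x⁻¹).reverse) (by
      intro t ht
      rw [List.mem_reverse, List.mem_map] at ht
      obtain ⟨s, hsl, rfl⟩ := ht
      obtain ⟨a, b, hab, rfl⟩ := hs s hsl
      exact ⟨a, b, hab, by simp⟩) hrev
    simpa [hlen] using this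
  exact le_antisymm (key σ) (by simpa using key σ⁻¹)

end Basics
section Counting
variable {n : ℕ}

/-- Elements that are minimal in their `r`-class. -/
def mins (r : Fin n → Fin n → Prop) : Set (Fin n) := {x | ∀ y, r x y → x ≤ y}

/-- Number of classes of `r`, counted via minimal representatives. -/
noncomputable def ccnt (r : Fin n → Fin n → Prop) : ℕ := (mins r).ncard

lemma mins_subset {r s : Fin n → Fin n → Prop} (h : ∀ x y, r x y → s x y) :
    mins s ⊆ mins r := fun x hx y hxy => hx y (h x y hxy)

lemma mins_congr {r s : Fin n → Fin n → Prop} (h : ∀ x y, r x y ↔ s x y) :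
    mins r = mins s :=
  Set.Subset.antisymm (mins_subset fun x y hxy => (h x y).mpr hxy)
    (mins_subset fun x y hxy => (h x y).mp hxy)

lemma ccnt_anti {r s : Fin n → Fin n → Prop} (h : ∀ x y, r x y → s x y) :
    ccnt s ≤ ccnt r := Set.ncard_le_ncard (mins_subset h) (Set.toFinite _)

lemma exists_classmin {r : Fin n → Fin n → Prop} (hr : Equivalence r) (a : Fin n) :
    ∃ m, r a m ∧ m ∈ mins r := by
  obtain ⟨m, hm, hmin⟩ := Set.exists_min_image {y | r a y} id (Set.toFinite _) ⟨a, hr.refl a⟩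
  refine ⟨m, hm, fun y hy => hmin y (hr.trans hm hy)⟩

lemma ccnt_lt {r s : Fin n → Fin n → Prop} (hr : Equivalence r) (hs : Equivalence s)
    (hrs : ∀ x y, r x y → s x y) {x y : Fin n} (hxy : s x y) (hnr : ¬ r x y) :
    ccnt s < ccnt r := by
  obtain ⟨m1, hm1, hmin1⟩ := exists_classmin hr x
  obtain ⟨m2, hm2, hmin2⟩ := exists_classmin hr y
  have hne : m1 ≠ m2 := by
    rintro rfl
    exact hnr (hr.trans hm1 (hr.symm hm2))
  have key : ∀ u v mu mv : Fin n, s u v → r u mu → r v mv → mv ∈ mins r → mv < mu →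
      mu ∉ mins s := by
    intro u v mu mv huv hu hv hminv hlt hmem
    have h1 : s mu mv := hs.trans (hs.symm (hrs _ _ hu)) (hs.trans huv (hrs _ _ hv))
    exact absurd (hmem _ h1) (not_le.mpr hlt)
  have hsub : mins s ⊆ mins r := mins_subset hrs
  have : ∃ z, z ∈ mins r ∧ z ∉ mins s := by
    rcases lt_or_gt_of_ne hne with h | h
    · exact ⟨m2, hmin2, key y x m2 m1 (hs.symm hxy) hm2 hm1 hmin1 h⟩
    · exact ⟨m1, hmin1, key x y m1 m2 hxy hm1 hm2 hmin2 h⟩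
  obtain ⟨z, hz1, hz2⟩ := this
  exact Set.ncard_lt_ncard ((Set.ssubset_iff_of_subset hsub).mpr ⟨z, hz1, hz2⟩) (Set.toFinite _)

/-- Join of an equivalence relation with the pair `(a,b)`. -/
def jn (r : Fin n → Fin n → Prop) (a b : Fin n) : Fin n → Fin n → Prop :=
  fun x y => r x y ∨ (r x a ∧ r b y) ∨ (r x b ∧ r a y)

lemma jn_equiv {r : Fin n → Fin n → Prop} (hr : Equivalence r) (a b : Fin n) :
    Equivalence (jn r a b) := by
  constructor
  · exact fun x => Or.inl (hr.refl x)
  · rintro x y (h | ⟨h1, h2⟩ | ⟨h1, h2⟩)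
    · exact Or.inl (hr.symm h)
    · exact Or.inr (Or.inr ⟨hr.symm h2, hr.symm h1⟩)
    · exact Or.inr (Or.inl ⟨hr.symm h2, hr.symm h1⟩)
  · rintro x y z (h | ⟨h1, h2⟩ | ⟨h1, h2⟩) (g | ⟨g1, g2⟩ | ⟨g1, g2⟩)
    · exact Or.inl (hr.trans h g)
    · exact Or.inr (Or.inl ⟨hr.trans h g1, g2⟩)
    · exact Or.inr (Or.inr ⟨hr.trans h g1, g2⟩)
    · exact Or.inr (Or.inl ⟨h1, hr.trans h2 g⟩)
    · exact Or.inr (Or.inl ⟨h1, g2⟩)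
    · exact Or.inl (hr.trans h1 g2)
    · exact Or.inr (Or.inr ⟨h1, hr.trans h2 g⟩)
    · exact Or.inl (hr.trans h1 g2)
    · exact Or.inl (hr.trans h1 (hr.trans (hr.symm (hr.trans h2 g1)) g2))

lemma jn_le {r : Fin n → Fin n → Prop} {a b x y : Fin n} (h : r x y) : jn r a b x y :=
  Or.inl h

lemma jn_ab {r : Fin n → Fin n → Prop} (hr : Equivalence r) (a b : Fin n) : jn r a b a b :=
  Or.inr (Or.inl ⟨hr.refl a, hr.refl b⟩)

lemma jn_eq_of_rel {r : Fin n → Fin n → Prop} (hr : Equivalence r) {a b : Fin n}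
    (hab : r a b) : ∀ x y, jn r a b x y ↔ r x y := by
  intro x y
  constructor
  · rintro (h | ⟨h1, h2⟩ | ⟨h1, h2⟩)
    · exact h
    · exact hr.trans h1 (hr.trans hab h2)
    · exact hr.trans h1 (hr.trans (hr.symm hab) h2)
  · exact Or.inl

lemma ccnt_jn_of_not_rel {r : Fin n → Fin n → Prop} (hr : Equivalence r) {a b : Fin n}
    (hab : ¬ r a b) : ccnt (jn r a b) + 1 = ccnt r := by
  -- helper: if the class-min of `b` is smaller than the class-min of `a`
  have helper : ∀ (r : Fin n → Fin n → Prop), Equivalence r → ∀ a b : Fin n, ¬ r a b →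
      ∀ ma mb : Fin n, r a ma → ma ∈ mins r → r b mb → mb ∈ mins r → mb < ma →
      ccnt (jn r a b) + 1 = ccnt r := by
    intro r hr a b hab ma mb hma hminA hmb hminB hlt
    have hset : mins (jn r a b) = mins r \ {ma} := by
      apply Set.Subset.antisymm
      · intro x hx
        refine ⟨mins_subset (fun x y => jn_le) hx, ?_⟩
        intro hxeq
        rw [Set.mem_singleton_iff] at hxeq
        have hj : jn r a b x mb :=
          Or.inr (Or.inl ⟨hr.symm (by rw [hxeq]; exact hma), hmb⟩)
        have := hx _ hj
        rw [hxeq] at this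
        exact absurd this (not_le.mpr hlt)
      · rintro x ⟨hx, hxma⟩
        simp only [Set.mem_singleton_iff] at hxma
        intro y hy
        rcases hy with h | ⟨h1, h2⟩ | ⟨h1, h2⟩
        · exact hx _ h
        · -- x is in the class of a, so x = ma, contradiction
          exfalso
          apply hxma
          have h3 : r x ma := hr.trans h1 hma
          exact le_antisymm (hx _ h3) (hminA _ (hr.symm h3))
        · -- x is in the class of b, so x = mb, and y is in class of a
          have h3 : r x mb := hr.trans h1 hmb
          have hx_eq : x = mb := le_antisymm (hx _ h3) (hminB _ (hr.symm h3))
          have h4 : r ma y := hr.trans (hr.symm hma) h2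
          calc x = mb := hx_eq
            _ ≤ ma := le_of_lt hlt
            _ ≤ y := hminA _ h4
    have hpos : ma ∈ mins r := hminA
    rw [ccnt, hset, Set.ncard_diff_singleton_of_mem hpos]
    have : 1 ≤ (mins r).ncard := by
      rw [Nat.one_le_iff_ne_zero, ← Nat.pos_iff_ne_zero, Set.ncard_pos (Set.toFinite _)]
      exact ⟨ma, hpos⟩
    unfold ccnt
    omega
  obtain ⟨ma, hma, hminA⟩ := exists_classmin hr a
  obtain ⟨mb, hmb, hminB⟩ := exists_classmin hr b
  have hne : ma ≠ mb := by
    rintro rfl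
    exact hab (hr.trans hma (hr.symm hmb))
  rcases lt_or_gt_of_ne hne with h | h
  · -- ma < mb : use helper with roles of a,b swapped; jn r a b = jn r b a
    have hsym : ∀ x y, jn r a b x y ↔ jn r b a x y := by
      intro x y; unfold jn; tauto
    have := helper r hr b a (fun hc => hab (hr.symm hc)) mb ma hmb hminB hma hminA h
    rw [ccnt, mins_congr hsym]
    exact this
  · exact helper r hr a b hab ma mb hma hminA hmb hminB h

lemma ccnt_jn_ge {r : Fin n → Fin n → Prop} (hr : Equivalence r) (a b : Fin n) :
    ccnt r ≤ ccnt (jn r a b) + 1 := by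
  by_cases hab : r a b
  · have h2 : ccnt (jn r a b) = ccnt r := by
      unfold ccnt
      rw [mins_congr (jn_eq_of_rel hr hab)]
    omega
  · exact (ccnt_jn_of_not_rel hr hab).ge

end Counting
section Cyc
variable {n : ℕ}

/-- Number of cycles (orbits, including fixed points) of a permutation. -/
noncomputable def cyc (σ : Perm (Fin n)) : ℕ := ccnt σ.SameCycle

lemma sameCycle_equiv (σ : Perm (Fin n)) : Equivalence σ.SameCycle :=
  ⟨fun x => Equiv.Perm.SameCycle.refl σ x, fun h => h.symm, fun h1 h2 => h1.trans h2⟩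

lemma sameCycle_apply_self (σ : Perm (Fin n)) (x : Fin n) : σ.SameCycle x (σ x) :=
  ⟨1, by simp⟩

@[simp] lemma cyc_one : cyc (1 : Perm (Fin n)) = n := by
  have : mins (Equiv.Perm.SameCycle (1 : Perm (Fin n))) = Set.univ := by
    ext x
    simp only [Set.mem_univ, iff_true, mins, Set.mem_setOf_eq]
    intro y hy
    rw [Equiv.Perm.sameCycle_one] at hy
    exact hy.le
  rw [cyc, ccnt, this, Set.ncard_univ, Nat.card_eq_fintype_card, Fintype.card_fin]

lemma cyc_le (σ : Perm (Fin n)) : cyc σ ≤ n := by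
  have := Set.ncard_le_ncard (Set.subset_univ (mins σ.SameCycle)) (Set.toFinite _)
  rwa [Set.ncard_univ, Nat.card_eq_fintype_card, Fintype.card_fin] at this

lemma fixed_sameCycle {σ : Perm (Fin n)} {x : Fin n} (h : σ x = x) {y : Fin n}
    (hxy : σ.SameCycle x y) : y = x := by
  obtain ⟨i, hi⟩ := hxy
  rw [Equiv.Perm.zpow_apply_eq_self_of_apply_eq_self h i] at hi
  exact hi.symm

/-- One step of the join bound: orbits of `swap a b * σ` refine the join of
orbits of `σ` with the pair `(a,b)`. -/
lemma sameCycle_swap_mul_le_jn (σ : Perm (Fin n)) (a b : Fin n) :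
    ∀ x y, (Equiv.swap a b * σ).SameCycle x y → jn σ.SameCycle a b x y := by
  set f := Equiv.swap a b * σ with hf
  have hstep : ∀ z, jn σ.SameCycle a b z (f z) := by
    intro z
    rcases eq_or_ne (σ z) a with h | h
    · have : f z = b := by rw [hf]; simp [Equiv.Perm.mul_apply, h]
      rw [this]
      exact Or.inr (Or.inl ⟨h ▸ sameCycle_apply_self σ z, Equiv.Perm.SameCycle.refl _ _⟩)
    · rcases eq_or_ne (σ z) b with h2 | h2
      · have : f z = a := by rw [hf]; simp [Equiv.Perm.mul_apply, h2]
        rw [this]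
        exact Or.inr (Or.inr ⟨h2 ▸ sameCycle_apply_self σ z, Equiv.Perm.SameCycle.refl _ _⟩)
      · have : f z = σ z := by
          rw [hf]; simp only [Equiv.Perm.mul_apply]
          exact Equiv.swap_apply_of_ne_of_ne h h2
        rw [this]
        exact Or.inl (sameCycle_apply_self σ z)
  intro x y hxy
  obtain ⟨i, -, hi⟩ := hxy.exists_pow_eq'
  subst hi
  clear hxy
  induction i with
  | zero => exact (jn_equiv (sameCycle_equiv σ) a b).refl x
  | succ k ih =>
    have h1 : (f ^ (k + 1)) x = f ((f ^ k) x) := by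
      rw [pow_succ']; rfl
    rw [h1]
    exact (jn_equiv (sameCycle_equiv σ) a b).trans ih (hstep _)

lemma cyc_le_cyc_swap_mul (σ : Perm (Fin n)) (a b : Fin n) :
    cyc σ ≤ cyc (Equiv.swap a b * σ) + 1 := by
  have h1 : ccnt (jn σ.SameCycle a b) ≤ cyc (Equiv.swap a b * σ) :=
    ccnt_anti (sameCycle_swap_mul_le_jn σ a b)
  have h2 : cyc σ ≤ ccnt (jn σ.SameCycle a b) + 1 := ccnt_jn_ge (sameCycle_equiv σ) a b
  omega

end Cyc
section Cyc2
variable {n : ℕ}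

lemma special_apply_self {σ : Perm (Fin n)} {a : Fin n} :
    (Equiv.swap a (σ a) * σ) a = a := by
  simp [Equiv.Perm.mul_apply]

lemma special_char {σ : Perm (Fin n)} {a : Fin n} (ha : σ a ≠ a) :
    ∀ x y, (Equiv.swap a (σ a) * σ).SameCycle x y →
      x = y ∨ (x ≠ a ∧ y ≠ a ∧ σ.SameCycle x y) := by
  set f := Equiv.swap a (σ a) * σ with hf
  intro x y hxy
  rcases eq_or_ne x a with rfl | hx
  · exact Or.inl (fixed_sameCycle special_apply_self hxy).symm
  · obtain ⟨i, -, hi⟩ := hxy.exists_pow_eq'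
    subst hi
    clear hxy
    have key : ∀ i : ℕ, (f ^ i) x ≠ a ∧ σ.SameCycle x ((f ^ i) x) := by
      intro i
      induction i with
      | zero => exact ⟨hx, Equiv.Perm.SameCycle.refl _ _⟩
      | succ k ih =>
        obtain ⟨hz, hsc⟩ := ih
        set z := (f ^ k) x with hzdef
        have hstep : (f ^ (k + 1)) x = f z := by rw [pow_succ']; rfl
        rcases eq_or_ne (σ z) a with h | h
        · have hfz : f z = σ a := by
            rw [hf]; simp [Equiv.Perm.mul_apply, h]
          rw [hstep, hfz]
          refine ⟨ha, hsc.trans ?_⟩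
          have : (σ ^ (2:ℤ)) z = σ a := by
            have : σ (σ z) = σ a := by rw [h]
            simpa [zpow_ofNat, pow_succ, Equiv.Perm.mul_apply] using this
          exact ⟨2, this⟩
        · have hzz : σ z ≠ σ a := fun hc => hz (σ.injective hc)
          have hfz : f z = σ z := by
            rw [hf]; simp only [Equiv.Perm.mul_apply]
            exact Equiv.swap_apply_of_ne_of_ne h hzz
          rw [hstep, hfz]
          exact ⟨h, hsc.trans (sameCycle_apply_self σ z)⟩
    exact Or.inr ⟨hx, (key i).1, (key i).2⟩

lemma cyc_special_split {σ : Perm (Fin n)} {a : Fin n} (ha : σ a ≠ a) :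
    cyc (Equiv.swap a (σ a) * σ) = cyc σ + 1 := by
  set f := Equiv.swap a (σ a) * σ with hf
  have hle : ∀ x y, f.SameCycle x y → σ.SameCycle x y := by
    intro x y hxy
    rcases special_char ha x y hxy with rfl | ⟨-, -, h⟩
    · exact Equiv.Perm.SameCycle.refl _ _
    · exact h
  have hlt : cyc σ < cyc f := by
    refine ccnt_lt (sameCycle_equiv f) (sameCycle_equiv σ) hle
      (sameCycle_apply_self σ a) (fun hc => ?_)
    exact ha (fixed_sameCycle special_apply_self hc)
  have hge : cyc f ≤ cyc σ + 1 := by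
    have h := cyc_le_cyc_swap_mul f a (σ a)
    have h2 : Equiv.swap a (σ a) * f = σ := by rw [hf]; exact Equiv.swap_mul_self_mul _ _ _
    rwa [h2] at h
  omega

lemma support_special {σ : Perm (Fin n)} {a : Fin n} :
    ∀ x, (Equiv.swap a (σ a) * σ) x ≠ x → σ x ≠ x ∧ x ≠ a := by
  intro x hx
  rcases eq_or_ne x a with rfl | hxa
  · exact absurd special_apply_self hx
  · refine ⟨fun hc => ?_, hxa⟩
    apply hx
    simp only [Equiv.Perm.mul_apply, hc]
    apply Equiv.swap_apply_of_ne_of_ne hxa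
    intro hc2
    rw [hc2] at hc
    exact hxa (hc2.trans (σ.injective hc))

theorem reflLen_add_cyc (σ : Perm (Fin n)) : reflLen σ + cyc σ = n := by
  have lower : ∀ l : List (Perm (Fin n)), (∀ t ∈ l, t.IsSwap) → n ≤ l.length + cyc l.prod := by
    intro l
    induction l with
    | nil => simp
    | cons t l ih =>
      intro hl
      obtain ⟨a, b, hab, rfl⟩ := hl t List.mem_cons_self
      have h1 := ih (fun s hs => hl s (List.mem_cons_of_mem _ hs))
      have h2 := cyc_le_cyc_swap_mul l.prod a b
      rw [List.prod_cons]
      simp only [List.length_cons]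
      omega
  have hlow : n ≤ reflLen σ + cyc σ := by
    obtain ⟨l, hs, hlen, hp⟩ := reflLen_spec σ
    have := lower l hs
    rw [hp, hlen] at this
    exact this
  have hupp : reflLen σ + cyc σ ≤ n := by
    have H : ∀ k (σ : Perm (Fin n)), σ.support.card = k → reflLen σ + cyc σ ≤ n := by
      intro k
      induction k using Nat.strong_induction_on with
      | _ k ih =>
        intro σ hcard
        rcases eq_or_ne σ 1 with rfl | hσ
        · simp
        · have : ∃ a, σ a ≠ a := by
            by_contra hc
            push_neg at hc
            exact hσ (Equiv.ext fun x => (hc x).trans rfl)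
          obtain ⟨a, ha⟩ := this
          set f := Equiv.swap a (σ a) * σ with hf
          have hsub : f.support ⊂ σ.support := by
            constructor
            · intro x hx
              rw [Equiv.Perm.mem_support] at hx ⊢
              exact (support_special x hx).1
            · intro hc
              have h1 : a ∈ σ.support := Equiv.Perm.mem_support.mpr ha
              have h2 : a ∉ f.support := by
                rw [Equiv.Perm.mem_support, not_not]
                exact special_apply_self
              exact h2 (hc h1)
          have hlt : f.support.card < k := hcard ▸ Finset.card_lt_card hsub
          have ihf := ih f.support.card hlt f rfl
          have hcyc : cyc f = cyc σ + 1 := cyc_special_split ha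
          have hr : reflLen σ ≤ 1 + reflLen f := by
            have : σ = Equiv.swap a (σ a) * f := by rw [hf, Equiv.swap_mul_self_mul]
            calc reflLen σ = reflLen (Equiv.swap a (σ a) * f) := by rw [← this]
              _ ≤ reflLen (Equiv.swap a (σ a)) + reflLen f := reflLen_mul_le _ _
              _ = 1 + reflLen f := by rw [reflLen_swap (Ne.symm ha)]
          omega
    exact H σ.support.card σ rfl
  omega

lemma parity_cyc (σ : Perm (Fin n)) :
    (-1 : ℤˣ) ^ cyc σ = (-1 : ℤˣ) ^ n * Equiv.Perm.sign σ := by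
  have H : ∀ k (σ : Perm (Fin n)), σ.support.card = k →
      (-1 : ℤˣ) ^ cyc σ = (-1 : ℤˣ) ^ n * Equiv.Perm.sign σ := by
    intro k
    induction k using Nat.strong_induction_on with
    | _ k ih =>
      intro σ hcard
      rcases eq_or_ne σ 1 with rfl | hσ
      · simp
      · have : ∃ a, σ a ≠ a := by
          by_contra hc
          push_neg at hc
          exact hσ (Equiv.ext fun x => (hc x).trans rfl)
        obtain ⟨a, ha⟩ := this
        set f := Equiv.swap a (σ a) * σ with hf
        have hsub : f.support ⊂ σ.support := by
          constructor
          · intro x hx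
            rw [Equiv.Perm.mem_support] at hx ⊢
            exact (support_special x hx).1
          · intro hc
            have h1 : a ∈ σ.support := Equiv.Perm.mem_support.mpr ha
            have h2 : a ∉ f.support := by
              rw [Equiv.Perm.mem_support, not_not]
              exact special_apply_self
            exact h2 (hc h1)
        have hlt : f.support.card < k := hcard ▸ Finset.card_lt_card hsub
        have ihf := ih f.support.card hlt f rfl
        have hcyc : cyc f = cyc σ + 1 := cyc_special_split ha
        have hsign : Equiv.Perm.sign f = -Equiv.Perm.sign σ := by
          rw [hf, map_mul, Equiv.Perm.sign_swap (Ne.symm ha), neg_one_mul]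
        rw [hcyc, hsign, pow_succ, mul_neg, mul_neg, mul_one] at ihf
        exact neg_injective ihf
  exact H σ.support.card σ rfl

lemma cyc_swap_mul_ne {σ : Perm (Fin n)} {a b : Fin n} (hab : a ≠ b) :
    cyc (Equiv.swap a b * σ) ≠ cyc σ := by
  intro hc
  have h1 := parity_cyc σ
  have h2 := parity_cyc (Equiv.swap a b * σ)
  rw [hc, h1, map_mul, Equiv.Perm.sign_swap hab, neg_one_mul, mul_neg, ← mul_neg] at h2
  have h3 : Equiv.Perm.sign σ = -Equiv.Perm.sign σ := mul_left_cancel h2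
  rcases Int.units_eq_one_or (Equiv.Perm.sign σ) with h4 | h4 <;> rw [h4] at h3 <;>
    exact absurd h3 (by decide)

lemma cyc_swap_mul_of_sameCycle {σ : Perm (Fin n)} {a b : Fin n} (hab : a ≠ b)
    (h : σ.SameCycle a b) : cyc (Equiv.swap a b * σ) = cyc σ + 1 := by
  set f := Equiv.swap a b * σ with hf
  have hle : ∀ x y, f.SameCycle x y → σ.SameCycle x y := by
    intro x y hxy
    exact (jn_eq_of_rel (sameCycle_equiv σ) h x y).mp (sameCycle_swap_mul_le_jn σ a b x y hxy)
  have h1 : cyc σ ≤ cyc f := ccnt_anti hle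
  have h2 : cyc f ≤ cyc σ + 1 := by
    have := cyc_le_cyc_swap_mul f a b
    rw [hf, Equiv.swap_mul_self_mul] at this
    exact this
  have h3 := cyc_swap_mul_ne (σ := σ) hab
  rw [← hf] at h3
  omega

lemma cyc_swap_mul_of_not_sameCycle {σ : Perm (Fin n)} {a b : Fin n} (hab : a ≠ b)
    (h : ¬ σ.SameCycle a b) : cyc (Equiv.swap a b * σ) + 1 = cyc σ := by
  set f := Equiv.swap a b * σ with hf
  have hσf : Equiv.swap a b * f = σ := by rw [hf, Equiv.swap_mul_self_mul]
  have B1 : cyc σ ≤ cyc f + 1 := cyc_le_cyc_swap_mul σ a b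
  have B2 : cyc f ≤ cyc σ + 1 := by
    have := cyc_le_cyc_swap_mul f a b
    rwa [hσf] at this
  have hne := cyc_swap_mul_ne (σ := σ) hab
  rw [← hf] at hne
  have hcase : cyc f = cyc σ + 1 ∨ cyc f + 1 = cyc σ := by omega
  rcases hcase with hc | hc
  · exfalso
    have hle : ∀ x y, σ.SameCycle x y → jn f.SameCycle a b x y := by
      intro x y hxy
      have := sameCycle_swap_mul_le_jn f a b x y
      rw [hσf] at this
      exact this hxy
    by_cases hab' : f.SameCycle a b
    · have hle2 : ∀ x y, σ.SameCycle x y → f.SameCycle x y := by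
        intro x y hxy
        exact (jn_eq_of_rel (sameCycle_equiv f) hab' x y).mp (hle x y hxy)
      have : cyc f ≤ cyc σ := ccnt_anti hle2
      omega
    · have hlt : ccnt (jn f.SameCycle a b) < cyc σ :=
        ccnt_lt (sameCycle_equiv σ) (jn_equiv (sameCycle_equiv f) a b) hle
          (jn_ab (sameCycle_equiv f) a b) h
      have hexact : ccnt (jn f.SameCycle a b) + 1 = cyc f :=
        ccnt_jn_of_not_rel (sameCycle_equiv f) hab'
      omega
  · exact hc

lemma reflLen_swap_mul_split {σ : Perm (Fin n)} {a b : Fin n} (hab : a ≠ b)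
    (h : σ.SameCycle a b) : reflLen (Equiv.swap a b * σ) + 1 = reflLen σ := by
  have h1 := reflLen_add_cyc σ
  have h2 := reflLen_add_cyc (Equiv.swap a b * σ)
  have h3 := cyc_swap_mul_of_sameCycle hab h
  omega

lemma reflLen_swap_mul_merge {σ : Perm (Fin n)} {a b : Fin n} (hab : a ≠ b)
    (h : ¬ σ.SameCycle a b) : reflLen (Equiv.swap a b * σ) = reflLen σ + 1 := by
  have h1 := reflLen_add_cyc σ
  have h2 := reflLen_add_cyc (Equiv.swap a b * σ)
  have h3 := cyc_swap_mul_of_not_sameCycle hab h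
  omega

lemma sameCycle_of_reflLen_le {σ : Perm (Fin n)} {a b : Fin n} (hab : a ≠ b)
    (h : reflLen (Equiv.swap a b * σ) ≤ reflLen σ) : σ.SameCycle a b := by
  by_contra hc
  have := reflLen_swap_mul_merge hab hc
  omega

end Cyc2
section Aligned
variable {n : ℕ}

/-- Each nontrivial cycle, traversed from its minimum, is increasing: any descent goes
from the maximum of the orbit to its minimum, and no step skips over an orbit element. -/
def Aligned (w : Perm (Fin n)) : Prop :=
  ∀ x y, w.SameCycle x y →
    (w x < x → w x ≤ y ∧ y ≤ x) ∧ (x < w x → ¬(x < y ∧ y < w x))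

lemma aligned_one : Aligned (1 : Perm (Fin n)) := by
  intro x y _
  constructor
  · intro h; simp at h
  · intro h; simp at h

lemma aligned_finRotate : ∀ n : ℕ, Aligned (finRotate n) := by
  intro n
  match n with
  | 0 => intro x; exact x.elim0
  | (m+1) =>
    intro x y _
    rw [finRotate_succ_apply]
    constructor
    · intro hd
      have hx : x = Fin.last m := by
        by_contra hc
        have : x < Fin.last m := lt_of_le_of_ne (Fin.le_last x) hc
        exact absurd (Fin.lt_add_one_iff.mpr this) (asymm hd)
      subst hx
      rw [Fin.last_add_one]
      exact ⟨Fin.zero_le y, Fin.le_last y⟩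
    · intro ha ⟨h1, h2⟩
      have hx : x < Fin.last m := Fin.lt_add_one_iff.mp ha
      have hv : (x + 1).val = x.val + 1 := Fin.val_add_one_of_lt hx
      have := Fin.lt_iff_val_lt_val.mp h1
      have := Fin.lt_iff_val_lt_val.mp h2
      omega

lemma aligned_split {v : Perm (Fin n)} (hv : Aligned v) {a b : Fin n} (hab : a < b)
    (hsc : v.SameCycle a b) : Aligned (Equiv.swap a b * v) := by
  set f := Equiv.swap a b * v with hf
  have hane : a ≠ b := ne_of_lt hab
  have hva : v a ≠ a := by
    intro h
    exact hane (fixed_sameCycle h hsc).symm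
  have hvb : v b ≠ b := by
    intro h
    exact hane (fixed_sameCycle h hsc.symm)
  set S : Fin n → Prop := fun z => a ≤ z ∧ z < b with hS
  -- basic computations of f
  have hfapp : ∀ x, f x = Equiv.swap a b (v x) := fun x => rfl
  have hcase1 : ∀ x, v x = a → f x = b := by
    intro x h; rw [hfapp, h, Equiv.swap_apply_left]
  have hcase2 : ∀ x, v x = b → f x = a := by
    intro x h; rw [hfapp, h, Equiv.swap_apply_right]
  have hcase3 : ∀ x, v x ≠ a → v x ≠ b → f x = v x := by
    intro x h1 h2; rw [hfapp, Equiv.swap_apply_of_ne_of_ne h1 h2]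
  -- x is in the class of a whenever v x ∈ {a, b}
  have hclass1 : ∀ x, v x = a → v.SameCycle x a := by
    intro x h; exact h ▸ sameCycle_apply_self v x
  have hclass2 : ∀ x, v x = b → v.SameCycle x a := by
    intro x h; exact (h ▸ sameCycle_apply_self v x).trans hsc.symm
  -- S x holds in the case v x = b
  have hSx2 : ∀ x, v x = b → S x := by
    intro x h2
    have hxa : v.SameCycle x a := hclass2 x h2
    have hxb : x ≠ b := by
      intro hc
      exact hvb (by rw [← hc] at h2 ⊢; exact h2)
    rcases lt_or_gt_of_ne hxb with hlt | hgt
    · -- x < b : use no-skip to get a ≤ x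
      refine ⟨?_, hlt⟩
      by_contra hc
      push_neg at hc
      have hasc : x < v x := h2 ▸ hlt
      exact (hv x a hxa).2 hasc ⟨hc, h2 ▸ hab⟩
    · -- b < x : descent, impossible
      exfalso
      have hd : v x < x := h2 ▸ hgt
      have := ((hv x a hxa).1 hd).1
      rw [h2] at this
      exact absurd (lt_of_lt_of_le hab this) (lt_irrefl a ∘ fun h => h)
  -- ¬ S x in the case v x = a
  have hSx1 : ∀ x, v x = a → ¬ S x := by
    intro x h1 ⟨hax, hxb⟩
    have hxa : v.SameCycle x a := hclass1 x h1
    have hxs : x ≠ a := by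
      intro hc; rw [hc] at h1; exact hva h1
    have hd : v x < x := h1 ▸ lt_of_le_of_ne hax (Ne.symm hxs)
    have := ((hv x b (hxa.trans hsc)).1 hd).2
    exact absurd hxb (not_lt.mpr this)
  -- single step lemma
  have hstep : ∀ x, v.SameCycle x (f x) ∧ (v.SameCycle x a → (S x ↔ S (f x))) := by
    intro x
    rcases eq_or_ne (v x) a with h1 | h1
    · rw [hcase1 x h1]
      refine ⟨(hclass1 x h1).trans hsc, fun _ => ?_⟩
      constructor
      · intro hSx; exact absurd hSx (hSx1 x h1)
      · intro ⟨_, hbb⟩; exact absurd hbb (lt_irrefl b)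
    · rcases eq_or_ne (v x) b with h2 | h2
      · rw [hcase2 x h2]
        refine ⟨(hclass2 x h2), fun _ => ?_⟩
        constructor
        · intro _; exact ⟨le_refl a, hab⟩
        · intro _; exact hSx2 x h2
      · rw [hcase3 x h1 h2]
        refine ⟨sameCycle_apply_self v x, fun hxa => ?_⟩
        rcases lt_trichotomy x (v x) with hasc | heq | hdesc
        · -- ascent
          constructor
          · intro ⟨ha1, hb1⟩
            refine ⟨le_trans ha1 (le_of_lt hasc), ?_⟩
            by_contra hc
            push_neg at hc
            have hbvx : b < v x := lt_of_le_of_ne hc (Ne.symm h2)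
            exact (hv x b (hxa.trans hsc)).2 hasc ⟨hb1, hbvx⟩
          · intro ⟨ha1, hb1⟩
            refine ⟨?_, lt_trans hasc hb1⟩
            by_contra hc
            push_neg at hc
            have havx : a < v x := lt_of_le_of_ne ha1 (Ne.symm h1)
            exact (hv x a hxa).2 hasc ⟨hc, havx⟩
        · rw [← heq]
        · -- descent: x is the max of the orbit, v x the min; both sides fail
          have hbnd : ∀ y', v.SameCycle x y' → v x ≤ y' ∧ y' ≤ x :=
            fun y' h => (hv x y' h).1 hdesc
          constructor
          · intro ⟨ha1, hb1⟩
            exfalso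
            have := (hbnd b (hxa.trans hsc)).2
            exact absurd hb1 (not_lt.mpr this)
          · intro ⟨ha1, hb1⟩
            exfalso
            have := (hbnd a hxa).1
            exact h1 (le_antisymm this ha1)
  -- orbit lemma
  have horb : ∀ x y, f.SameCycle x y →
      v.SameCycle x y ∧ (v.SameCycle x a → (S x ↔ S y)) := by
    intro x y hxy
    obtain ⟨i, -, hi⟩ := hxy.exists_pow_eq'
    subst hi
    clear hxy
    induction i with
    | zero => exact ⟨Equiv.Perm.SameCycle.refl _ _, fun _ => Iff.rfl⟩
    | succ k ih =>
      obtain ⟨ih1, ih2⟩ := ih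
      set z := (f ^ k) x with hz
      have hpow : (f ^ (k + 1)) x = f z := by rw [pow_succ']; rfl
      obtain ⟨hs1, hs2⟩ := hstep z
      rw [hpow]
      refine ⟨ih1.trans hs1, fun hxa => ?_⟩
      have hza : v.SameCycle z a := (ih1.symm.trans hxa)
      exact (ih2 hxa).trans (hs2 hza)
  -- main proof
  intro x y hxy
  obtain ⟨hvxy, hSxy⟩ := horb x y hxy
  constructor
  · -- descent for f
    intro hdesc
    rcases eq_or_ne (v x) a with h1 | h1
    · rw [hcase1 x h1] at hdesc ⊢
      -- f x = b < x
      have hxa : v.SameCycle x a := hclass1 x h1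
      have hax : a < x := lt_trans hab hdesc
      have hdv : v x < x := h1 ▸ hax
      have hbnd := (hv x y hvxy).1 hdv
      refine ⟨?_, hbnd.2⟩
      -- b ≤ y : from S-invariance
      have hnSx : ¬ S x := hSx1 x h1
      have hnSy : ¬ S y := fun hSy => hnSx ((hSxy hxa).mpr hSy)
      have hay : a ≤ y := h1 ▸ hbnd.1
      by_contra hc
      push_neg at hc
      exact hnSy ⟨hay, hc⟩
    · rcases eq_or_ne (v x) b with h2 | h2
      · rw [hcase2 x h2] at hdesc ⊢
        -- f x = a < x
        have hxa : v.SameCycle x a := hclass2 x h2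
        have hSx : S x := hSx2 x h2
        have hSy : S y := (hSxy hxa).mp hSx
        refine ⟨hSy.1, ?_⟩
        -- y ≤ x : no-skip at x (ascent x < b = v x)
        by_contra hc
        push_neg at hc
        have hxb : x < v x := h2 ▸ hSx.2
        exact (hv x y hvxy).2 hxb ⟨hc, h2 ▸ hSy.2⟩
      · rw [hcase3 x h1 h2] at hdesc ⊢
        exact (hv x y hvxy).1 hdesc
  · -- no-skip for f
    intro hasc ⟨h4, h5⟩
    rcases eq_or_ne (v x) a with h1 | h1
    · rw [hcase1 x h1] at hasc h5
      -- f x = b, x < b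
      have hxa : v.SameCycle x a := hclass1 x h1
      have hxla : x < a := by
        rcases lt_or_ge x a with h | h
        · exact h
        · exfalso
          have hxs : x ≠ a := by
            intro hc; rw [hc] at h1; exact hva h1
          have hax : a < x := lt_of_le_of_ne h (Ne.symm hxs)
          have hdv : v x < x := h1 ▸ hax
          have := ((hv x b (hxa.trans hsc)).1 hdv).2
          exact absurd hasc (not_lt.mpr this)
      -- x < a = v x : ascent for v
      have hnSx : ¬ S x := fun hSx => absurd hSx.1 (not_le.mpr hxla)
      have hnSy : ¬ S y := fun hSy => hnSx ((hSxy hxa).mpr hSy)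
      have hya : y < a := by
        rcases lt_or_ge y a with h | h
        · exact h
        · exact absurd ⟨h, h5⟩ hnSy
      exact (hv x y hvxy).2 (h1 ▸ hxla) ⟨h4, h1 ▸ hya⟩
    · rcases eq_or_ne (v x) b with h2 | h2
      · rw [hcase2 x h2] at hasc h5
        -- f x = a, x < a; but then no-skip at x (v x = b) with y := a is violated
        have hxa : v.SameCycle x a := hclass2 x h2
        have hxb : x < v x := h2 ▸ lt_trans hasc hab
        exact (hv x a hxa).2 hxb ⟨hasc, h2 ▸ hab⟩
      · rw [hcase3 x h1 h2] at hasc h5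
        exact (hv x y hvxy).2 hasc ⟨h4, h5⟩

end Aligned
section A1
variable {n : ℕ}

lemma aligned_of_absLe_finRotate {w : Perm (Fin n)} (h : absLe w (finRotate n)) :
    Aligned w := by
  have H : ∀ r (w : Perm (Fin n)), absLe w (finRotate n) →
      reflLen (w⁻¹ * finRotate n) = r → Aligned w := by
    intro r
    induction r with
    | zero =>
      intro w _ hr
      have h1 : w⁻¹ * finRotate n = 1 := reflLen_eq_zero_iff.mp hr
      have h2 : w = finRotate n := inv_mul_eq_one.mp h1
      rw [h2]
      exact aligned_finRotate n
    | succ r ih =>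
      intro w h hr
      obtain ⟨l, hs, hlen, hp⟩ := reflLen_spec (w⁻¹ * finRotate n)
      rw [hr] at hlen
      match l, hlen, hs, hp with
      | t :: l', hlen, hs, hp =>
      simp only [List.length_cons, Nat.succ.injEq] at hlen
      obtain ⟨a', b', hne', ht⟩ := hs t List.mem_cons_self
      set c := finRotate n with hc
      set v := w * t with hv
      have htt : t * t = 1 := by rw [ht, Equiv.swap_mul_self]
      have hvc : v⁻¹ * c = l'.prod := by
        calc v⁻¹ * c = t⁻¹ * (w⁻¹ * c) := by rw [hv, mul_inv_rev, mul_assoc]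
          _ = t⁻¹ * (t * l'.prod) := by rw [← hp, List.prod_cons]
          _ = l'.prod := by rw [inv_mul_cancel_left]
      have h1 : reflLen (v⁻¹ * c) ≤ r := by
        rw [hvc, ← hlen]
        exact reflLen_le (fun s hsmem => hs s (List.mem_cons_of_mem _ hsmem)) rfl
      have h2 : reflLen v ≤ reflLen w + 1 := by
        calc reflLen v ≤ reflLen w + reflLen t := reflLen_mul_le w t
          _ = reflLen w + 1 := by rw [ht, reflLen_swap hne']
      have h3 : reflLen c ≤ reflLen v + reflLen (v⁻¹ * c) := by
        have := reflLen_mul_le v (v⁻¹ * c)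
        rwa [mul_inv_cancel_left] at this
      have habs : absLe v c := by
        unfold absLe at h ⊢
        omega
      have hveq : reflLen v = reflLen w + 1 := by
        unfold absLe at h
        omega
      have hal := ih v habs (by unfold absLe at h habs; omega)
      have hwv : w = v * t := by
        rw [hv, mul_assoc, htt, mul_one]
      have hw : w = Equiv.swap (v a') (v b') * v := by
        rw [ht] at hwv
        rw [Equiv.swap_apply_apply, inv_mul_cancel_right]
        exact hwv
      have hinj : v a' ≠ v b' := fun hcon => hne' (v.injective hcon)
      have hred : reflLen (Equiv.swap (v a') (v b') * v) ≤ reflLen v := by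
        rw [← hw]
        omega
      have hSC : v.SameCycle (v a') (v b') := sameCycle_of_reflLen_le hinj hred
      rcases lt_or_gt_of_ne hinj with hlt | hgt
      · rw [hw]; exact aligned_split hal hlt hSC
      · rw [hw, Equiv.swap_comm]; exact aligned_split hal hgt hSC.symm
  exact H _ w h rfl

end A1
section Exist
variable {n : ℕ}

lemma support_nonempty_of_ne {w : Perm (Fin n)} (hw : w ≠ 1) : w.support.Nonempty :=
  Finset.nonempty_iff_ne_empty.mpr fun hc => hw (Equiv.Perm.support_eq_empty_iff.mp hc)

lemma swap_eq_swap_iff' {a b c d : Fin n} (hab : a < b) (hcd : c < d)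
    (h : Equiv.swap a b = Equiv.swap c d) : a = c ∧ b = d := by
  have h1 : Equiv.swap c d a = b := by rw [← h, Equiv.swap_apply_left]
  rcases eq_or_ne a c with rfl | hac
  · refine ⟨rfl, ?_⟩
    rw [Equiv.swap_apply_left] at h1
    exact h1.symm
  · rcases eq_or_ne a d with rfl | had
    · exfalso
      rw [Equiv.swap_apply_right] at h1
      rw [← h1] at hab
      exact absurd hab (not_lt.mpr hcd.le)
    · exfalso
      rw [Equiv.swap_apply_of_ne_of_ne hac had] at h1
      exact absurd h1 (ne_of_lt hab)

lemma transLt_trans : Transitive (transLt (n := n)) := by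
  rintro t1 t2 t3 ⟨i, j, i', j', hij, hij', ht1, ht2, hcmp⟩
    ⟨p, q, p', q', hpq, hpq', ht2', ht3, hcmp'⟩
  obtain ⟨he1, he2⟩ := swap_eq_swap_iff' hij' hpq (ht2.symm.trans ht2')
  subst he1; subst he2
  refine ⟨i, j, p', q', hij, hpq', ht1, ht3, ?_⟩
  rcases hcmp with h | ⟨h, h2⟩ <;> rcases hcmp' with g | ⟨g, g2⟩
  · exact Or.inl (h.trans g)
  · exact Or.inl (g ▸ h)
  · exact Or.inl (h ▸ g)
  · exact Or.inr ⟨h.trans g, h2.trans g2⟩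

lemma chain'_head_rel {α : Type*} {R : α → α → Prop} (htr : Transitive R) :
    ∀ (l : List α) (a : α), List.Chain' R (a :: l) → ∀ b ∈ l, R a b := by
  intro l
  induction l with
  | nil => intro a _ b hb; simp at hb
  | cons c rest ih =>
    intro a h b hb
    have h1 : R a c := (List.isChain_cons_cons.mp h).1
    rcases List.mem_cons.mp hb with rfl | hb'
    · exact h1
    · exact htr h1 (ih c (List.isChain_cons_cons.mp h).2 b hb')

lemma list_prod_fix {l : List (Perm (Fin n))} {m : Fin n} (h : ∀ t ∈ l, t m = m) :
    l.prod m = m := by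
  induction l with
  | nil => simp
  | cons a l ih =>
    rw [List.prod_cons, Equiv.Perm.mul_apply, ih (fun t ht => h t (List.mem_cons_of_mem _ ht)),
      h a List.mem_cons_self]

/-- Facts about the minimal support element. -/
lemma minsupp_lt {w : Perm (Fin n)} (hw : w ≠ 1) :
    w.support.min' (support_nonempty_of_ne hw) <
      w (w.support.min' (support_nonempty_of_ne hw)) := by
  set m := w.support.min' (support_nonempty_of_ne hw) with hm
  have hmem : m ∈ w.support := Finset.min'_mem _ _
  have h1 : w m ≠ m := Equiv.Perm.mem_support.mp hmem
  have h2 : w m ∈ w.support := Equiv.Perm.apply_mem_support.mpr hmem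
  exact lt_of_le_of_ne (Finset.min'_le _ _ h2) (Ne.symm h1)

lemma exists_increasing_list :
    ∀ (k : ℕ) (w : Perm (Fin n)), Aligned w → reflLen w = k →
    ∃ l : List (Perm (Fin n)), (∀ t ∈ l, t.IsSwap) ∧ l.length = k ∧ l.prod = w ∧
      l.Chain' transLt ∧
      ∀ hw : w ≠ 1, l.head? = some (Equiv.swap (w.support.min' (support_nonempty_of_ne hw))
        (w (w.support.min' (support_nonempty_of_ne hw)))) := by
  intro k
  induction k with
  | zero =>
    intro w _ hk
    have hw : w = 1 := reflLen_eq_zero_iff.mp hk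
    exact ⟨[], by simp, rfl, by simp [hw], List.isChain_nil, fun h => absurd hw h⟩
  | succ k ih =>
    intro w hal hk
    have hw : w ≠ 1 := by
      intro hc; rw [hc, reflLen_one] at hk; exact Nat.succ_ne_zero k hk.symm
    set m := w.support.min' (support_nonempty_of_ne hw) with hm
    have hmlt : m < w m := minsupp_lt hw
    have hmne : m ≠ w m := ne_of_lt hmlt
    have hsc : w.SameCycle m (w m) := sameCycle_apply_self w m
    set t : Perm (Fin n) := Equiv.swap m (w m) with ht
    set w' : Perm (Fin n) := t * w with hw'
    have hsplit : reflLen w' + 1 = reflLen w := reflLen_swap_mul_split hmne hsc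
    have hk' : reflLen w' = k := by omega
    have hal' : Aligned w' := aligned_split hal hmlt hsc
    obtain ⟨l', hs', hlen', hp', hch', hhead'⟩ := ih w' hal' hk'
    have hsupp' : ∀ x, w' x ≠ x → w x ≠ x ∧ x ≠ m := support_special
    refine ⟨t :: l', ?_, by simp [hlen'], ?_, ?_, ?_⟩
    · intro s hs
      rcases List.mem_cons.mp hs with rfl | hmem
      · exact ⟨m, w m, hmne, ht⟩
      · exact hs' s hmem
    · rw [List.prod_cons, hp', hw', ht, Equiv.swap_mul_self_mul]
    · refine List.isChain_cons.mpr ?_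
      refine ⟨?_, hch'⟩
      intro b hb
      have hl'ne : w' ≠ 1 := by
        intro hc
        rw [hc, reflLen_one] at hk'
        rw [← hk', List.length_eq_zero_iff] at hlen'
        rw [hlen'] at hb
        simp at hb
      rw [hhead' hl'ne] at hb
      have hb' : b = Equiv.swap (w'.support.min' (support_nonempty_of_ne hl'ne))
          (w' (w'.support.min' (support_nonempty_of_ne hl'ne))) := by
        exact (by simpa using hb : _ = b).symm
      set m' := w'.support.min' (support_nonempty_of_ne hl'ne) with hm'
      have hm'lt : m' < w' m' := minsupp_lt hl'ne
      have hm'mem : m' ∈ w'.support := Finset.min'_mem _ _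
      have hm'w : m' ∈ w.support := by
        rw [Equiv.Perm.mem_support]
        exact (hsupp' m' (Equiv.Perm.mem_support.mp hm'mem)).1
      have hmm' : m < m' := by
        have h1 : m ≤ m' := Finset.min'_le _ _ hm'w
        have h2 : m' ≠ m := (hsupp' m' (Equiv.Perm.mem_support.mp hm'mem)).2
        exact lt_of_le_of_ne h1 (Ne.symm h2)
      exact ⟨m, w m, m', w' m', hmlt, hm'lt, ht, hb', Or.inl hmm'⟩
    · intro _
      rfl

end Exist
section Uniq
variable {n : ℕ}

lemma isSwap_ordered {s : Perm (Fin n)} (h : s.IsSwap) :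
    ∃ i j : Fin n, i < j ∧ s = Equiv.swap i j := by
  obtain ⟨a, b, hab, rfl⟩ := h
  rcases lt_or_gt_of_ne hab with h | h
  · exact ⟨a, b, h, rfl⟩
  · exact ⟨b, a, h, Equiv.swap_comm a b ▸ rfl⟩

lemma unique_increasing_list :
    ∀ (k : ℕ) (w : Perm (Fin n)), Aligned w → reflLen w = k →
    ∀ l₁ l₂ : List (Perm (Fin n)),
      ((∀ t ∈ l₁, t.IsSwap) ∧ l₁.length = k ∧ l₁.prod = w ∧ l₁.Chain' transLt) →
      ((∀ t ∈ l₂, t.IsSwap) ∧ l₂.length = k ∧ l₂.prod = w ∧ l₂.Chain' transLt) →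
      l₁ = l₂ := by
  intro k
  induction k using Nat.strong_induction_on with
  | _ k ih =>
  match k with
  | 0 =>
    intro w _ _ l₁ l₂ h₁ h₂
    rw [List.length_eq_zero_iff.mp h₁.2.1, List.length_eq_zero_iff.mp h₂.2.1]
  | (k+1) =>
    intro w hal hk l₁ l₂ h₁ h₂
    have hw : w ≠ 1 := by
      intro hc; rw [hc, reflLen_one] at hk; exact Nat.succ_ne_zero k hk.symm
    set m := w.support.min' (support_nonempty_of_ne hw) with hm
    have hmmem : m ∈ w.support := Finset.min'_mem _ _
    have hmlt : m < w m := minsupp_lt hw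
    have hsc : w.SameCycle m (w m) := sameCycle_apply_self w m
    -- every valid list begins with swap m (w m)
    have forced : ∀ l : List (Perm (Fin n)), (∀ t ∈ l, t.IsSwap) → l.length = k + 1 →
        l.prod = w → l.Chain' transLt → ∃ tail, l = Equiv.swap m (w m) :: tail := by
      intro l hsw hlen hprod hch
      -- Step A : every member, written as swap i j with i < j, has i,j in the same cycle of w
      have stepA : ∀ u ∈ l, ∀ i j : Fin n, i < j → u = Equiv.swap i j → w.SameCycle i j := by
        intro u hu i j hij hs
        obtain ⟨l₁', l₂', hdecomp⟩ := List.append_of_mem hu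
        have hprod' : w = l₁'.prod * (u * l₂'.prod) := by
          rw [← hprod, hdecomp, List.prod_append, List.prod_cons]
        have hlen' : l₁'.length + (1 + l₂'.length) = k + 1 := by
          rw [← hlen, hdecomp, List.length_append, List.length_cons]
          omega
        have hcalc : Equiv.swap i j * w = (u * l₁'.prod * u) * l₂'.prod := by
          rw [hprod', ← hs]
          simp only [mul_assoc]
        have hconj : reflLen (u * l₁'.prod * u) = reflLen l₁'.prod := by
          have huu : u * l₁'.prod * u = u * l₁'.prod * u⁻¹ := by
            rw [hs, Equiv.swap_inv]
          rw [huu, reflLen_conj]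
        have h2 : reflLen l₁'.prod ≤ l₁'.length :=
          reflLen_le (fun t ht => hsw t (by rw [hdecomp]; exact List.mem_append_left _ ht)) rfl
        have h3 : reflLen l₂'.prod ≤ l₂'.length :=
          reflLen_le (fun t ht => hsw t (by
            rw [hdecomp]; exact List.mem_append_right _ (List.mem_cons_of_mem _ ht))) rfl
        have h4 : reflLen (Equiv.swap i j * w) ≤ reflLen w := by
          calc reflLen (Equiv.swap i j * w) = reflLen ((u * l₁'.prod * u) * l₂'.prod) := by
                rw [hcalc]
            _ ≤ reflLen (u * l₁'.prod * u) + reflLen l₂'.prod := reflLen_mul_le _ _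
            _ = reflLen l₁'.prod + reflLen l₂'.prod := by rw [hconj]
            _ ≤ l₁'.length + l₂'.length := by omega
            _ ≤ reflLen w := by omega
        exact sameCycle_of_reflLen_le (ne_of_lt hij) h4
      have stepA2 : ∀ u ∈ l, ∀ i j : Fin n, i < j → u = Equiv.swap i j →
          i ∈ w.support ∧ j ∈ w.support := by
        intro u hu i j hij hs
        have hsc' := stepA u hu i j hij hs
        constructor
        · rw [Equiv.Perm.mem_support]
          intro hc
          exact absurd (fixed_sameCycle hc hsc') (ne_of_gt hij)
        · rw [Equiv.Perm.mem_support]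
          intro hc
          exact absurd (fixed_sameCycle hc hsc'.symm) (ne_of_lt hij)
      -- Step B : some member moves m
      have stepB : ∃ u ∈ l, u m ≠ m := by
        by_contra hc
        push_neg at hc
        have := list_prod_fix hc
        rw [hprod] at this
        exact Equiv.Perm.mem_support.mp hmmem this
      obtain ⟨u, hu, hum⟩ := stepB
      obtain ⟨i, j, hij, hs⟩ := isSwap_ordered (hsw u hu)
      -- Step C : u = swap m j
      have hieqm : i = m := by
        have hmem2 := stepA2 u hu i j hij hs
        have : i = m ∨ j = m := by
          by_contra hc
          push_neg at hc
          apply hum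
          rw [hs]
          exact Equiv.swap_apply_of_ne_of_ne (Ne.symm hc.1) (Ne.symm hc.2)
        rcases this with h | h
        · exact h
        · exfalso
          have h1 : m ≤ i := Finset.min'_le _ _ hmem2.1
          rw [h] at hij
          exact absurd hij (not_lt.mpr h1)
      -- Step D : the first entry is swap m b for some b
      match l, hlen, hsw, hprod, hch, hu with
      | t₁ :: ltl, hlen, hsw, hprod, hch, hu =>
      obtain ⟨i₁, j₁, hij₁, ht₁⟩ := isSwap_ordered (hsw t₁ List.mem_cons_self)
      have hi₁ : i₁ = m := by
        rcases List.mem_cons.mp hu with rfl | hutl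
        · have := swap_eq_swap_iff' hij₁ (hieqm ▸ hij) (ht₁.symm.trans (hieqm ▸ hs))
          exact this.1
        · have htrans := chain'_head_rel transLt_trans ltl t₁ hch u hutl
          obtain ⟨p, q, p', q', hpq, hpq', hte, hue, hcmp⟩ := htrans
          obtain ⟨hp1, hq1⟩ := swap_eq_swap_iff' hpq hij₁ (hte.symm.trans ht₁)
          obtain ⟨hp2, hq2⟩ := swap_eq_swap_iff' hpq' (hieqm ▸ hij) (hue.symm.trans (hieqm ▸ hs))
          have hbound : m ≤ i₁ :=
            Finset.min'_le _ _ (stepA2 t₁ List.mem_cons_self i₁ j₁ hij₁ ht₁).1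
          rcases hcmp with hlt | ⟨heq, _⟩
          · rw [hp1, hp2] at hlt
            exact absurd hlt (not_lt.mpr hbound)
          · rw [← hp1, heq, hp2]
      subst hi₁
      -- Step E : in fact j₁ = w m
      have hj₁ : j₁ = w m := by
        by_contra hbne
        have hscmb : w.SameCycle m j₁ := stepA t₁ List.mem_cons_self m j₁ hij₁ ht₁
        set v : Perm (Fin n) := Equiv.swap m j₁ * w with hv
        have hsplitv : reflLen v + 1 = reflLen w := reflLen_swap_mul_split (ne_of_lt hij₁) hscmb
        have hvk : reflLen v = k := by omega
        have hval : Aligned v := aligned_split hal hij₁ hscmb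
        have hvm : v m = w m := by
          rw [hv, Equiv.Perm.mul_apply]
          apply Equiv.swap_apply_of_ne_of_ne
          · exact Equiv.Perm.mem_support.mp hmmem
          · exact fun hc => hbne (hc.symm)
        have hvne : v ≠ 1 := by
          intro hc
          have : v m = m := by rw [hc]; rfl
          rw [hvm] at this
          exact Equiv.Perm.mem_support.mp hmmem this
        have hkpos : k ≠ 0 := by
          intro hc
          rw [hc] at hvk
          exact hvne (reflLen_eq_zero_iff.mp hvk)
        -- ltl is a valid increasing list for v
        have hltl_prod : ltl.prod = v := by
          have := hprod
          rw [List.prod_cons, ht₁] at this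
          rw [hv, ← this, ← mul_assoc, Equiv.swap_mul_self, one_mul]
        have hltl_len : ltl.length = k := by
          simpa using hlen
        have hltl_swaps : ∀ t ∈ ltl, t.IsSwap := fun t ht => hsw t (List.mem_cons_of_mem _ ht)
        have hltl_ch : ltl.Chain' transLt := (List.isChain_cons.mp hch).2
        obtain ⟨l₀, hl₀s, hl₀len, hl₀prod, hl₀ch, hl₀head⟩ := exists_increasing_list k v hval hvk
        have heq : ltl = l₀ := ih k (Nat.lt_succ_self k) v hval hvk ltl l₀
          ⟨hltl_swaps, hltl_len, hltl_prod, hltl_ch⟩ ⟨hl₀s, hl₀len, hl₀prod, hl₀ch⟩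
        -- the head of ltl is swap m₀ (v m₀) with m₀ = m
        set m₀ := v.support.min' (support_nonempty_of_ne hvne) with hm₀
        have hm₀m : m₀ = m := by
          have hsubv : ∀ x : Fin n, v x ≠ x → w x ≠ x := by
            intro x hx
            intro hc
            apply hx
            rw [hv, Equiv.Perm.mul_apply, hc]
            apply Equiv.swap_apply_of_ne_of_ne
            · intro hc2
              rw [hc2] at hc
              exact Equiv.Perm.mem_support.mp hmmem hc
            · intro hc2
              rw [hc2] at hc
              have hj₁mem := (stepA2 t₁ List.mem_cons_self m j₁ hij₁ ht₁).2
              exact Equiv.Perm.mem_support.mp hj₁mem hc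
          have h1 : m ≤ m₀ := by
            apply Finset.min'_le
            rw [Equiv.Perm.mem_support]
            exact hsubv m₀ (Equiv.Perm.mem_support.mp (Finset.min'_mem _ _))
          have h2 : m₀ ≤ m := by
            apply Finset.min'_le
            rw [Equiv.Perm.mem_support, hvm]
            exact Equiv.Perm.mem_support.mp hmmem
          exact le_antisymm h2 h1
        -- ltl is nonempty, with known head
        have hltlne : ltl ≠ [] := by
          intro hc
          rw [hc] at hltl_len
          exact hkpos hltl_len.symm
        obtain ⟨b₀, ltl', rfl⟩ := List.exists_cons_of_ne_nil hltlne
        have hb₀ : b₀ = Equiv.swap m (w m) := by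
          have := hl₀head hvne
          rw [← heq] at this
          simp only [List.head?_cons, Option.some_inj] at this
          rw [this, ← hm₀, hm₀m, hvm]
        -- transLt t₁ b₀ gives j₁ < w m, contradicting no-skip
        have htrans : transLt t₁ b₀ :=
          chain'_head_rel transLt_trans (b₀ :: ltl') t₁ hch b₀ List.mem_cons_self
        obtain ⟨p, q, p', q', hpq, hpq', hte, hue, hcmp⟩ := htrans
        obtain ⟨hp1, hq1⟩ := swap_eq_swap_iff' hpq hij₁ (hte.symm.trans ht₁)
        obtain ⟨hp2, hq2⟩ := swap_eq_swap_iff' hpq' hmlt (hue.symm.trans hb₀)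
        rcases hcmp with hlt | ⟨heq2, hlt2⟩
        · rw [hp1, hp2] at hlt
          exact absurd hlt (lt_irrefl m)
        · rw [hq1, hq2] at hlt2
          exact (hal m j₁ hscmb).2 hmlt ⟨hij₁, hlt2⟩
      subst hj₁
      exact ⟨ltl, by rw [ht₁]⟩
    -- apply `forced` to both lists
    obtain ⟨tail₁, rfl⟩ := forced l₁ h₁.1 h₁.2.1 h₁.2.2.1 h₁.2.2.2
    obtain ⟨tail₂, rfl⟩ := forced l₂ h₂.1 h₂.2.1 h₂.2.2.1 h₂.2.2.2
    -- tails are valid lists for w' = swap m (w m) * w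
    set w' : Perm (Fin n) := Equiv.swap m (w m) * w with hw'
    have hsplit : reflLen w' + 1 = reflLen w := reflLen_swap_mul_split (ne_of_lt hmlt) hsc
    have hk' : reflLen w' = k := by omega
    have hal' : Aligned w' := aligned_split hal hmlt hsc
    have tailprod : ∀ tail : List (Perm (Fin n)),
        (Equiv.swap m (w m) :: tail).prod = w → tail.prod = w' := by
      intro tail htp
      rw [List.prod_cons] at htp
      have h2 : Equiv.swap m (w m) * (Equiv.swap m (w m) * tail.prod)
          = Equiv.swap m (w m) * w := congrArg _ htp
      rw [Equiv.swap_mul_self_mul] at h2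
      rw [hw']
      exact h2
    have htail := ih k (Nat.lt_succ_self k) w' hal' hk' tail₁ tail₂
      ⟨fun t ht => h₁.1 t (List.mem_cons_of_mem _ ht), by simpa using h₁.2.1,
        tailprod tail₁ h₁.2.2.1, (List.isChain_cons.mp h₁.2.2.2).2⟩
      ⟨fun t ht => h₂.1 t (List.mem_cons_of_mem _ ht), by simpa using h₂.2.1,
        tailprod tail₂ h₂.2.2.1, (List.isChain_cons.mp h₂.2.2.2).2⟩
    rw [htail]

end Uniq
section Final
variable {n : ℕ}

lemma isSwap_reflLen_one {t : Perm (Fin n)} (h : t.IsSwap) : reflLen t = 1 := by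
  obtain ⟨a, b, hab, rfl⟩ := h
  exact reflLen_swap hab

lemma isSwap_ne_one {t : Perm (Fin n)} (h : t.IsSwap) : t ≠ 1 := by
  intro hc
  have := isSwap_reflLen_one h
  rw [hc, reflLen_one] at this
  exact one_ne_zero this.symm

lemma absCovers_iff {u v : Perm (Fin n)} :
    absCovers u v ↔ ((u⁻¹ * v).IsSwap ∧ reflLen v = reflLen u + 1) := by
  constructor
  · rintro ⟨⟨hle, hne⟩, hmid⟩
    have hr0 : u⁻¹ * v ≠ 1 := fun hc => hne (inv_mul_eq_one.mp hc)
    obtain ⟨l, hsl, hlenl, hpl⟩ := reflLen_spec (u⁻¹ * v)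
    match l, hsl, hlenl, hpl with
    | [], _, _, hpl => exact absurd hpl.symm hr0
    | t :: rest, hsl, hlenl, hpl =>
    by_cases hrest : rest = []
    · subst hrest
      simp only [List.prod_cons, List.prod_nil, mul_one] at hpl
      have hsw : (u⁻¹ * v).IsSwap := by rw [← hpl]; exact hsl t List.mem_cons_self
      refine ⟨hsw, ?_⟩
      unfold absLe at hle
      rw [isSwap_reflLen_one hsw] at hle
      omega
    · exfalso
      set z := u * t with hz
      have hrlen : reflLen (u⁻¹ * v) = 1 + rest.length := by
        rw [← hlenl, List.length_cons]; omega
      have htsw : t.IsSwap := hsl t List.mem_cons_self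
      have hz2 : reflLen (z⁻¹ * v) ≤ rest.length := by
        have hzv : z⁻¹ * v = rest.prod := by
          rw [hz, mul_inv_rev, mul_assoc, ← hpl, List.prod_cons, ← mul_assoc,
            inv_mul_cancel, one_mul]
        rw [hzv]
        exact reflLen_le (fun s hs => hsl s (List.mem_cons_of_mem _ hs)) rfl
      have hz1 : reflLen z ≤ reflLen u + 1 := by
        calc reflLen z ≤ reflLen u + reflLen t := reflLen_mul_le u t
          _ = reflLen u + 1 := by rw [isSwap_reflLen_one htsw]
      have hv : reflLen v ≤ reflLen z + reflLen (z⁻¹ * v) := by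
        have := reflLen_mul_le z (z⁻¹ * v)
        rwa [mul_inv_cancel_left] at this
      have hrestpos : rest.length ≠ 0 := fun hc => hrest (List.length_eq_zero_iff.mp hc)
      unfold absLe at hle
      have hzeq : reflLen z = reflLen u + 1 := by omega
      have hzveq : reflLen (z⁻¹ * v) = rest.length := by omega
      apply hmid z
      refine ⟨⟨?_, ?_⟩, ?_, ?_⟩
      · unfold absLe
        have huz : u⁻¹ * z = t := by rw [hz, inv_mul_cancel_left]
        rw [huz, isSwap_reflLen_one htsw]
        omega
      · intro hc
        have h6 : u = u * t := hc.trans hz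
        have h5 : u⁻¹ * u = u⁻¹ * (u * t) := congrArg _ h6
        rw [inv_mul_cancel, inv_mul_cancel_left] at h5
        exact isSwap_ne_one htsw h5.symm
      · unfold absLe
        omega
      · intro hc
        rw [hc, inv_mul_cancel, reflLen_one] at hzveq
        exact hrestpos hzveq.symm
  · rintro ⟨hsw, hlen⟩
    have hr1 : reflLen (u⁻¹ * v) = 1 := isSwap_reflLen_one hsw
    refine ⟨⟨by unfold absLe; omega, ?_⟩, ?_⟩
    · intro hc
      rw [hc, inv_mul_cancel] at hsw
      exact isSwap_ne_one hsw rfl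
    · rintro z ⟨⟨hle1, hne1⟩, hle2, hne2⟩
      unfold absLe at hle1 hle2
      have h1 : reflLen (u⁻¹ * z) ≠ 0 :=
        fun hc => hne1 (inv_mul_eq_one.mp (reflLen_eq_zero_iff.mp hc))
      have h2 : reflLen (z⁻¹ * v) ≠ 0 :=
        fun hc => hne2 (inv_mul_eq_one.mp (reflLen_eq_zero_iff.mp hc))
      omega

lemma take_prod_get {G : Type*} [Group G] (l : List G) (i : ℕ) (h : i < l.length) :
    (l.take i).prod⁻¹ * (l.take (i + 1)).prod = l.get ⟨i, h⟩ := by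
  rw [List.prod_take_succ l i h, inv_mul_cancel_left]
  exact (List.get_eq_getElem (l := l) (i := ⟨i, h⟩)).symm

lemma chain'_pairwise {α : Type*} {R : α → α → Prop} (htr : Transitive R) :
    ∀ l : List α, List.Chain' R l → List.Pairwise R l := by
  intro l
  induction l with
  | nil => intro _; exact List.Pairwise.nil
  | cons a tl ih =>
    intro h
    exact List.Pairwise.cons (chain'_head_rel htr tl a h) (ih (List.isChain_cons.mp h).2)

lemma prod_ofFn_telescope {G : Type*} [Group G] :
    ∀ (k : ℕ) (c : Fin (k + 1) → G),
      (List.ofFn fun i : Fin k => (c i.castSucc)⁻¹ * c i.succ).prod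
        = (c 0)⁻¹ * c (Fin.last k) := by
  intro k
  induction k with
  | zero => intro c; simp [Fin.last]
  | succ k ih =>
    intro c
    rw [List.ofFn_succ', List.prod_concat]
    show (List.ofFn fun i : Fin k => (c i.castSucc.castSucc)⁻¹ * c i.castSucc.succ).prod
        * ((c (Fin.last k).castSucc)⁻¹ * c (Fin.last k).succ)
      = (c 0)⁻¹ * c (Fin.last (k + 1))
    have hrw : (fun i : Fin k => (c i.castSucc.castSucc)⁻¹ * c i.castSucc.succ)
        = fun i : Fin k => (c i.castSucc.castSucc)⁻¹ * c i.succ.castSucc :=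
      funext fun i => by rw [Fin.succ_castSucc]
    rw [hrw]
    have hih : (List.ofFn fun i : Fin k => (c i.castSucc.castSucc)⁻¹ * c i.succ.castSucc).prod
        = (c ((0 : Fin (k + 1)).castSucc))⁻¹ * c (Fin.last k).castSucc :=
      ih fun j : Fin (k + 1) => c j.castSucc
    rw [hih, mul_assoc, mul_inv_cancel_left, Fin.succ_last, Fin.castSucc_zero]

lemma chain_eq_of_labels {G : Type*} [Group G] {k : ℕ} (c c' : Fin (k + 1) → G)
    (h0 : c 0 = c' 0)
    (hlab : ∀ i : Fin k, (c i.castSucc)⁻¹ * c i.succ = (c' i.castSucc)⁻¹ * c' i.succ) :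
    c = c' := by
  funext i
  induction i using Fin.induction with
  | zero => exact h0
  | succ i ihc =>
    calc c i.succ = c i.castSucc * ((c i.castSucc)⁻¹ * c i.succ) :=
          (mul_inv_cancel_left _ _).symm
      _ = c' i.castSucc * ((c' i.castSucc)⁻¹ * c' i.succ) := by rw [hlab i, ihc]
      _ = c' i.succ := mul_inv_cancel_left _ _

lemma absLe_w_c {x y : Perm (Fin n)} (hxy : absLe x y) (hyw : absLe y (finRotate n)) :
    absLe (x⁻¹ * y) (finRotate n) := by
  unfold absLe at *
  have h1 : reflLen ((x⁻¹ * y)⁻¹ * y) = reflLen x := by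
    have h : (x⁻¹ * y)⁻¹ * y = y⁻¹ * x * (y⁻¹)⁻¹ := by group
    rw [h, reflLen_conj]
  have h3 : reflLen ((x⁻¹ * y)⁻¹ * finRotate n)
      ≤ reflLen ((x⁻¹ * y)⁻¹ * y) + reflLen (y⁻¹ * finRotate n) := by
    have h : (x⁻¹ * y)⁻¹ * finRotate n = ((x⁻¹ * y)⁻¹ * y) * (y⁻¹ * finRotate n) := by group
    rw [h]
    exact reflLen_mul_le _ _
  have h4 : reflLen (finRotate n) ≤ reflLen (x⁻¹ * y) + reflLen ((x⁻¹ * y)⁻¹ * finRotate n) := by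
    have := reflLen_mul_le (x⁻¹ * y) ((x⁻¹ * y)⁻¹ * finRotate n)
    rwa [mul_inv_cancel_left] at this
  omega

lemma ofFn_eq_get {α : Type*} {k : ℕ} {f : Fin k → α} {l : List α}
    (h : List.ofFn f = l) (i : Fin k) (p : (i : ℕ) < l.length) : f i = l.get ⟨(i : ℕ), p⟩ := by
  subst h
  rw [List.get_ofFn]
  congr 1

end Final
/-- Every interval `[x, y]` of `NC(S_n, (1 2 ... n))` contains a unique maximal chain whose
sequence of edge labels `(cᵢ)⁻¹cᵢ₊₁` is strictly increasing in the lexicographic order on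
transpositions. -/
theorem unique_increasing_maximal_chain (n : ℕ) (hn : 2 ≤ n) (x y : Perm (Fin n))
    (hxy : absLe x y) (hyw : absLe y (finRotate n)) :
    ∃! c : Fin (reflLen (x⁻¹ * y) + 1) → Perm (Fin n),
      c 0 = x ∧ c (Fin.last _) = y ∧
      (∀ i : Fin (reflLen (x⁻¹ * y)), absCovers (c i.castSucc) (c i.succ)) ∧
      (∀ i j : Fin (reflLen (x⁻¹ * y)), i < j →
        transLt ((c i.castSucc)⁻¹ * c i.succ) ((c j.castSucc)⁻¹ * c j.succ)) := by
  classical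
  have hwc : absLe (x⁻¹ * y) (finRotate n) := absLe_w_c hxy hyw
  have hal : Aligned (x⁻¹ * y) := aligned_of_absLe_finRotate hwc
  set w := x⁻¹ * y with hwdef
  set k := reflLen w with hkdef
  obtain ⟨l, hls, hllen, hlprod, hlch, -⟩ := exists_increasing_list k w hal hkdef.symm
  have hxw : x * w = y := by rw [hwdef, mul_inv_cancel_left]
  have hyx : reflLen y = reflLen x + k := by
    unfold absLe at hxy
    rw [← hwdef] at hxy
    omega
  have hstep : ∀ i : ℕ, i ≤ k → reflLen (x * (l.take i).prod) = reflLen x + i := by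
    intro i hi
    have hup : reflLen (x * (l.take i).prod) ≤ reflLen x + i := by
      have h1 : reflLen (l.take i).prod ≤ i := by
        have h2 := reflLen_le (l := l.take i)
          (fun t ht => hls t (List.mem_of_mem_take ht)) rfl
        rw [List.length_take, hllen] at h2
        omega
      calc reflLen (x * (l.take i).prod)
          ≤ reflLen x + reflLen (l.take i).prod := reflLen_mul_le _ _
        _ ≤ reflLen x + i := by omega
    have hdec : (x * (l.take i).prod) * (l.drop i).prod = y := by
      rw [mul_assoc, ← List.prod_append, List.take_append_drop, hlprod, hxw]
    have hdrop : reflLen (l.drop i).prod ≤ k - i := by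
      have h2 := reflLen_le (l := l.drop i)
        (fun t ht => hls t (List.mem_of_mem_drop ht)) rfl
      rw [List.length_drop, hllen] at h2
      omega
    have hdown : reflLen y ≤ reflLen (x * (l.take i).prod) + (k - i) := by
      calc reflLen y = reflLen ((x * (l.take i).prod) * (l.drop i).prod) := by rw [hdec]
        _ ≤ reflLen (x * (l.take i).prod) + reflLen (l.drop i).prod := reflLen_mul_le _ _
        _ ≤ reflLen (x * (l.take i).prod) + (k - i) := by omega
    omega
  set cc : Fin (k + 1) → Perm (Fin n) := fun i => x * (l.take (i : ℕ)).prod with hcc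
  have hlab : ∀ i : Fin k,
      (cc i.castSucc)⁻¹ * cc i.succ = l.get ⟨(i : ℕ), by rw [hllen]; exact i.isLt⟩ := by
    intro i
    show (x * (l.take ((i.castSucc : Fin (k + 1)) : ℕ)).prod)⁻¹
        * (x * (l.take ((i.succ : Fin (k + 1)) : ℕ)).prod) = _
    rw [Fin.coe_castSucc, Fin.val_succ, mul_inv_rev, mul_assoc, inv_mul_cancel_left]
    exact take_prod_get l (i : ℕ) (by rw [hllen]; exact i.isLt)
  have hcc0 : cc 0 = x := by
    show x * (l.take ((0 : Fin (k + 1)) : ℕ)).prod = x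
    simp
  have hcclast : cc (Fin.last k) = y := by
    show x * (l.take ((Fin.last k : Fin (k + 1)) : ℕ)).prod = y
    rw [Fin.val_last, ← hllen, List.take_length, hlprod, hxw]
  have hccov : ∀ i : Fin k, absCovers (cc i.castSucc) (cc i.succ) := by
    intro i
    rw [absCovers_iff]
    refine ⟨by rw [hlab i]; exact hls _ (List.get_mem l _), ?_⟩
    show reflLen (x * (l.take ((i.succ : Fin (k + 1)) : ℕ)).prod)
        = reflLen (x * (l.take ((i.castSucc : Fin (k + 1)) : ℕ)).prod) + 1
    rw [Fin.coe_castSucc, Fin.val_succ, hstep ((i : ℕ) + 1) i.isLt,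
      hstep (i : ℕ) (le_of_lt i.isLt)]
    omega
  have hcinc : ∀ i j : Fin k, i < j →
      transLt ((cc i.castSucc)⁻¹ * cc i.succ) ((cc j.castSucc)⁻¹ * cc j.succ) := by
    intro i j hij
    rw [hlab i, hlab j]
    exact List.pairwise_iff_get.mp (chain'_pairwise transLt_trans l hlch) _ _
      (Fin.mk_lt_mk.mpr hij)
  refine ⟨cc, ⟨hcc0, hcclast, hccov, hcinc⟩, ?_⟩
  rintro c ⟨hc0, hclast, hcov, hinc⟩
  set L := List.ofFn (fun i : Fin k => (c i.castSucc)⁻¹ * c i.succ) with hLdef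
  have hLs : ∀ t ∈ L, t.IsSwap := by
    intro t ht
    rw [hLdef, List.mem_ofFn] at ht
    obtain ⟨i, rfl⟩ := ht
    exact (absCovers_iff.mp (hcov i)).1
  have hLlen : L.length = k := by rw [hLdef, List.length_ofFn]
  have hLprod : L.prod = w := by
    rw [hLdef, prod_ofFn_telescope k c, hc0, hclast]
  have hLch : L.Chain' transLt := by
    apply List.Pairwise.isChain
    rw [hLdef]
    apply List.pairwise_iff_get.mpr
    intro i j hij
    rw [List.get_ofFn, List.get_ofFn]
    exact hinc _ _ (by rw [Fin.lt_def] at hij ⊢; simpa using hij)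
  have hLl : L = l := unique_increasing_list k w hal hkdef.symm L l
    ⟨hLs, hLlen, hLprod, hLch⟩ ⟨hls, hllen, hlprod, hlch⟩
  apply chain_eq_of_labels c cc (hc0.trans hcc0.symm)
  intro i
  have h1 : (c i.castSucc)⁻¹ * c i.succ = l.get ⟨(i : ℕ), by rw [hllen]; exact i.isLt⟩ :=
    ofFn_eq_get (hLdef.symm.trans hLl) i _
  rw [h1, hlab i]
end

section
/- The dual Artin group of type Ã₁, with presentation ⟨a_i (i ∈ ℤ) | a_{i+1} a_i = a_{j+1} a_j for all i, j ∈ ℤ⟩, is isomorphic to the standard Artin group of type Ã₁, the free group on two generators ⟨a₀, a₁⟩ (no relations). -/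
/-- Relations of the dual Artin group of type `Ã₁`: generators `aᵢ` for `i ∈ ℤ` and
relations `a_{i+1} aᵢ = a_{j+1} aⱼ` for all `i, j ∈ ℤ`. -/
def dualArtinA1Rels : Set (FreeGroup ℤ) :=
  {r | ∃ i j : ℤ, r = FreeGroup.of (i + 1) * FreeGroup.of i *
    (FreeGroup.of (j + 1) * FreeGroup.of j)⁻¹}

namespace DualA1

/-- The Coxeter element `w = a₁ a₀` in the free group on two generators. -/
def w : FreeGroup (Fin 2) := FreeGroup.of 1 * FreeGroup.of 0

/-- Image of the generator `aᵢ` under the isomorphism: `a_{2k} ↦ wᵏ a₀ w⁻ᵏ`,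
`a_{2k+1} ↦ wᵏ a₁ w⁻ᵏ`. -/
def A (i : ℤ) : FreeGroup (Fin 2) :=
  w ^ (i / 2) * (if i % 2 = 0 then FreeGroup.of 0 else FreeGroup.of 1) * w ^ (-(i / 2))

lemma A_zero : A 0 = FreeGroup.of 0 := by simp [A]
lemma A_one : A 1 = FreeGroup.of 1 := by norm_num [A]

lemma ofof : FreeGroup.of 1 * FreeGroup.of 0 = w := rfl

lemma key (i : ℤ) : A (i + 1) * A i = w := by
  rcases Int.even_or_odd i with ⟨k, hk⟩ | ⟨k, hk⟩
  · have h1 : (i + 1) / 2 = k := by omega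
    have h2 : i / 2 = k := by omega
    have h3 : (i + 1) % 2 = 1 := by omega
    have h4 : i % 2 = 0 := by omega
    simp only [A, h1, h2, h3, h4, if_pos rfl]
    norm_num
    rw [mul_assoc (w ^ k), ofof]
    group
  · have h1 : (i + 1) / 2 = k + 1 := by omega
    have h2 : i / 2 = k := by omega
    have h3 : (i + 1) % 2 = 0 := by omega
    have h4 : i % 2 = 1 := by omega
    simp only [A, h1, h2, h3, h4, if_pos rfl]
    norm_num
    nth_rewrite 2 [← ofof]
    rw [w]
    group

lemma rels_hold : ∀ r ∈ dualArtinA1Rels, FreeGroup.lift A r = 1 := by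
  rintro r ⟨i, j, rfl⟩
  simp only [map_mul, map_inv, FreeGroup.lift_apply_of]
  rw [key, key, mul_inv_cancel]

/-- The homomorphism from the dual Artin group to the free group. -/
def φ : PresentedGroup dualArtinA1Rels →* FreeGroup (Fin 2) :=
  PresentedGroup.toGroup rels_hold

/-- The homomorphism from the free group to the dual Artin group. -/
def ψ : FreeGroup (Fin 2) →* PresentedGroup dualArtinA1Rels :=
  FreeGroup.lift (fun x => PresentedGroup.of (x : ℤ))

lemma rel_in (i : ℤ) :
    (PresentedGroup.of (i + 1) : PresentedGroup dualArtinA1Rels) * PresentedGroup.of i =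
      PresentedGroup.of 1 * PresentedGroup.of 0 := by
  have h : FreeGroup.of (i + 1) * FreeGroup.of i *
      (FreeGroup.of 1 * FreeGroup.of 0)⁻¹ ∈ Subgroup.normalClosure dualArtinA1Rels :=
    Subgroup.subset_normalClosure ⟨i, 0, by norm_num⟩
  have h1 := (QuotientGroup.eq_one_iff _).mpr h
  have h2 : (PresentedGroup.of (i + 1) : PresentedGroup dualArtinA1Rels) * PresentedGroup.of i *
      (PresentedGroup.of 1 * PresentedGroup.of 0)⁻¹ = 1 := h1
  rwa [mul_inv_eq_one] at h2

lemma psiw : ψ w = PresentedGroup.of 1 * PresentedGroup.of 0 := by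
  simp only [ψ, w, map_mul, FreeGroup.lift_apply_of]
  norm_num

lemma psiA (i : ℤ) : ψ (A i) = PresentedGroup.of i := by
  have step : ∀ j : ℤ, ψ (A (j + 1)) =
      (PresentedGroup.of 1 * PresentedGroup.of 0) * (ψ (A j))⁻¹ := by
    intro j
    have h := congrArg ψ (key j)
    rw [map_mul] at h
    rw [← psiw, ← h]
    group
  induction i using Int.induction_on with
  | zero => rw [A_zero]; simp only [ψ, FreeGroup.lift_apply_of]; norm_num
  | succ n ih =>
      rw [step, ih, ← rel_in (n : ℤ)]
      group
  | pred n ih =>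
      have st := step (-(n : ℤ) - 1)
      rw [show (-(n : ℤ) - 1 + 1) = -n from by ring, ih] at st
      have hr := rel_in (-(n : ℤ) - 1)
      rw [show (-(n : ℤ) - 1 + 1) = -n from by ring] at hr
      have e1 : ψ (A (-(n : ℤ) - 1)) =
          (PresentedGroup.of (-(n : ℤ)))⁻¹ * (PresentedGroup.of 1 * PresentedGroup.of 0) := by
        rw [st]; group
      have e2 : (PresentedGroup.of (-(n : ℤ) - 1) : PresentedGroup dualArtinA1Rels) =
          (PresentedGroup.of (-(n : ℤ)))⁻¹ * (PresentedGroup.of 1 * PresentedGroup.of 0) := by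
        rw [← hr]; group
      rw [e1, e2]

end DualA1

/-- The dual Artin group of type `Ã₁` is isomorphic to the standard Artin group of type
`Ã₁`, i.e. the free group on two generators, via an isomorphism sending `a₀, a₁` to the
two free generators. -/
theorem dualArtinA1_iso_freeGroup :
    ∃ φ : PresentedGroup dualArtinA1Rels ≃* FreeGroup (Fin 2),
      φ (PresentedGroup.of 0) = FreeGroup.of 0 ∧
      φ (PresentedGroup.of 1) = FreeGroup.of 1 := by
  have h1 : DualA1.ψ.comp DualA1.φ = MonoidHom.id _ := by
    ext x
    simp only [MonoidHom.comp_apply, MonoidHom.id_apply, DualA1.φ, PresentedGroup.toGroup.of]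
    exact DualA1.psiA x
  have h2 : DualA1.φ.comp DualA1.ψ = MonoidHom.id _ := by
    ext x
    fin_cases x <;>
      simp only [MonoidHom.comp_apply, MonoidHom.id_apply, DualA1.ψ, FreeGroup.lift_apply_of,
        DualA1.φ, PresentedGroup.toGroup.of] <;>
      norm_num [DualA1.A_zero, DualA1.A_one]
  refine ⟨MonoidHom.toMulEquiv DualA1.φ DualA1.ψ h1 h2, ?_, ?_⟩ <;>
    simp only [MonoidHom.toMulEquiv, MulEquiv.coe_mk, Equiv.coe_fn_mk, DualA1.φ,
      PresentedGroup.toGroup.of] <;>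
    norm_num [DualA1.A_zero, DualA1.A_one]
end
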